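/- For every point x of X₂, the complement X₂ \ {x} is connected. -/
import Mathlib

open OnePoint

/-- Identifications `(0,0)∼(0,1)`, `(1,0)∼(2,1)`, `(1,1)∼(2,0)` on `S × Fin 2`. -/
def relEx3₂ : OnePoint ℂ × Fin 2 → OnePoint ℂ × Fin 2 → Prop := fun a b =>
  (a = (((0 : ℂ) : OnePoint ℂ), 0) ∧ b = (((0 : ℂ) : OnePoint ℂ), 1)) ∨
  (a = (((1 : ℂ) : OnePoint ℂ), 0) ∧ b = (((2 : ℂ) : OnePoint ℂ), 1)) ∨
  (a = (((1 : ℂ) : OnePoint ℂ), 1) ∧ b = (((2 : ℂ) : OnePoint ℂ), 0))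

private lemma relEx3_R_trans : ∀ a b c : OnePoint ℂ × Fin 2,
    (a = b ∨ relEx3₂ a b ∨ relEx3₂ b a) → (b = c ∨ relEx3₂ b c ∨ relEx3₂ c b) →
    (a = c ∨ relEx3₂ a c ∨ relEx3₂ c a) := by
  intro a b c hab hbc
  have h01 : ((0 : ℂ) : OnePoint ℂ) ≠ ((1 : ℂ) : OnePoint ℂ) := by
    simp only [ne_eq, OnePoint.coe_eq_coe]; norm_num
  have h02 : ((0 : ℂ) : OnePoint ℂ) ≠ ((2 : ℂ) : OnePoint ℂ) := by
    simp only [ne_eq, OnePoint.coe_eq_coe]; norm_num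
  have h12 : ((1 : ℂ) : OnePoint ℂ) ≠ ((2 : ℂ) : OnePoint ℂ) := by
    simp only [ne_eq, OnePoint.coe_eq_coe]; norm_num
  rcases hab with rfl | hab | hab
  · exact hbc
  · rcases hbc with rfl | hbc | hbc
    · exact Or.inr (Or.inl hab)
    · simp only [relEx3₂] at hab hbc ⊢
      rcases hab with ⟨rfl, rfl⟩ | ⟨rfl, rfl⟩ | ⟨rfl, rfl⟩ <;>
        rcases hbc with ⟨h, rfl⟩ | ⟨h, rfl⟩ | ⟨h, rfl⟩ <;>
          simp_all [Prod.ext_iff]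
    · simp only [relEx3₂] at hab hbc ⊢
      rcases hab with ⟨rfl, rfl⟩ | ⟨rfl, rfl⟩ | ⟨rfl, rfl⟩ <;>
        rcases hbc with ⟨rfl, h⟩ | ⟨rfl, h⟩ | ⟨rfl, h⟩ <;>
          simp_all [Prod.ext_iff]
  · rcases hbc with rfl | hbc | hbc
    · exact Or.inr (Or.inr hab)
    · simp only [relEx3₂] at hab hbc ⊢
      rcases hab with ⟨h, rfl⟩ | ⟨h, rfl⟩ | ⟨h, rfl⟩ <;>
        rcases hbc with ⟨rfl, rfl⟩ | ⟨rfl, rfl⟩ | ⟨rfl, rfl⟩ <;>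
          simp_all [Prod.ext_iff]
    · simp only [relEx3₂] at hab hbc ⊢
      rcases hab with ⟨h, rfl⟩ | ⟨h, rfl⟩ | ⟨h, rfl⟩ <;>
        rcases hbc with ⟨rfl, h'⟩ | ⟨rfl, h'⟩ | ⟨rfl, h'⟩ <;>
          simp_all [Prod.ext_iff]

private lemma quot_eq_iff (a b : OnePoint ℂ × Fin 2) :
    Quot.mk relEx3₂ a = Quot.mk relEx3₂ b ↔
      (a = b ∨ relEx3₂ a b ∨ relEx3₂ b a) := by
  rw [Quot.eq]
  constructor
  · intro h
    induction h with
    | rel a b h => exact Or.inr (Or.inl h)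
    | refl a => exact Or.inl rfl
    | symm a b _ ih =>
        rcases ih with rfl | h | h
        · exact Or.inl rfl
        · exact Or.inr (Or.inr h)
        · exact Or.inr (Or.inl h)
    | trans a b c _ _ ih₁ ih₂ => exact relEx3_R_trans a b c ih₁ ih₂
  · rintro (rfl | h | h)
    · exact Relation.EqvGen.refl _
    · exact Relation.EqvGen.rel _ _ h
    · exact Relation.EqvGen.symm _ _ (Relation.EqvGen.rel _ _ h)

private lemma mk_inj (i : Fin 2) {s t : OnePoint ℂ}
    (h : Quot.mk relEx3₂ (s, i) = Quot.mk relEx3₂ (t, i)) : s = t := by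
  rw [quot_eq_iff] at h
  rcases h with h | h | h
  · exact congrArg Prod.fst h
  · simp only [relEx3₂, Prod.mk.injEq] at h
    rcases h with ⟨⟨_, h1⟩, ⟨_, h2⟩⟩ | ⟨⟨_, h1⟩, ⟨_, h2⟩⟩ | ⟨⟨_, h1⟩, ⟨_, h2⟩⟩ <;>
      subst h1 <;> exact absurd h2 (by decide)
  · simp only [relEx3₂, Prod.mk.injEq] at h
    rcases h with ⟨⟨_, h1⟩, ⟨_, h2⟩⟩ | ⟨⟨_, h1⟩, ⟨_, h2⟩⟩ | ⟨⟨_, h1⟩, ⟨_, h2⟩⟩ <;>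
      subst h1 <;> exact absurd h2 (by decide)

private lemma conn_compl (a : OnePoint ℂ) :
    IsConnected ({a}ᶜ : Set (OnePoint ℂ)) := by
  have hC : IsConnected (Set.univ : Set ℂ) :=
    ⟨⟨0, trivial⟩, isPreconnected_univ⟩
  cases a with
  | infty =>
      have : ({(∞ : OnePoint ℂ)}ᶜ : Set (OnePoint ℂ)) = Set.range ((↑) : ℂ → OnePoint ℂ) := by
        rw [← OnePoint.compl_range_coe, compl_compl]
      rw [this, ← Set.image_univ]
      exact hC.image _ OnePoint.continuous_coe.continuousOn
  | coe z =>
      have hconn : IsConnected (((↑) : ℂ → OnePoint ℂ) '' {z}ᶜ) := by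
        refine IsConnected.image ?_ _ OnePoint.continuous_coe.continuousOn
        exact isConnected_compl_singleton_of_one_lt_rank
          (by rw [Complex.rank_real_complex]; norm_num) z
      refine hconn.subset_closure ?_ ?_
      · rintro _ ⟨w, hw, rfl⟩
        simpa [OnePoint.coe_eq_coe] using hw
      · intro w hw
        cases w with
        | infty =>
            rw [mem_closure_iff_nhds_basis OnePoint.hasBasis_nhds_infty]
            rintro K ⟨-, hK⟩
            have : (K ∪ {z}) ≠ Set.univ := (hK.union isCompact_singleton).ne_univ
            obtain ⟨u, hu⟩ : ∃ u : ℂ, u ∉ K ∪ {z} := by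
              by_contra h
              push_neg at h
              exact this (Set.eq_univ_of_forall h)
            simp only [Set.mem_union, Set.mem_singleton_iff, not_or] at hu
            exact ⟨(u : OnePoint ℂ), ⟨u, hu.2, rfl⟩,
              Or.inl ⟨u, hu.1, rfl⟩⟩
        | coe v =>
            have hv : v ≠ z := by
              simpa [OnePoint.coe_eq_coe] using hw
            exact subset_closure ⟨v, hv, rfl⟩

private lemma conn_univ_onePoint : IsConnected (Set.univ : Set (OnePoint ℂ)) := by
  have hC : IsConnected (Set.univ : Set ℂ) := ⟨⟨0, trivial⟩, isPreconnected_univ⟩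
  have hr : IsConnected (Set.range ((↑) : ℂ → OnePoint ℂ)) := by
    rw [← Set.image_univ]; exact hC.image _ OnePoint.continuous_coe.continuousOn
  refine hr.subset_closure (Set.subset_univ _) ?_
  have : Dense (Set.range ((↑) : ℂ → OnePoint ℂ)) := OnePoint.denseRange_coe
  rw [this.closure_eq]

/-- for every point `x` of `X₂ = Quot relEx3₂`, the complement `X₂ \ {x}`
is connected. -/
theorem double_cover_statement_15 (x : Quot relEx3₂) :
    IsConnected ({x}ᶜ : Set (Quot relEx3₂)) := by
  set q : OnePoint ℂ × Fin 2 → Quot relEx3₂ := Quot.mk relEx3₂ with hq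
  have hqc : Continuous q := continuous_quot_mk
  set f : Fin 2 → OnePoint ℂ → Quot relEx3₂ := fun i s => q (s, i) with hf
  have hfc : ∀ i, Continuous (f i) := fun i =>
    hqc.comp (continuous_id.prodMk continuous_const)
  set T : Fin 2 → Set (OnePoint ℂ) := fun i => {s | f i s ≠ x} with hT
  set A : Fin 2 → Set (Quot relEx3₂) := fun i => f i '' T i with hA
  have connT : ∀ i, IsConnected (T i) := by
    intro i
    by_cases h : ∃ a, f i a = x
    · obtain ⟨a, ha⟩ := h
      have : T i = {a}ᶜ := by
        ext s
        simp only [hT, Set.mem_setOf_eq, Set.mem_compl_iff, Set.mem_singleton_iff]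
        constructor
        · intro hs hsa; exact hs (hsa ▸ ha)
        · intro hs hsx; exact hs (mk_inj i (hsx.trans ha.symm))
      rw [this]; exact conn_compl a
    · push_neg at h
      have : T i = Set.univ := Set.eq_univ_of_forall fun s => h s
      rw [this]; exact conn_univ_onePoint
  have connA : ∀ i, IsConnected (A i) := fun i =>
    (connT i).image _ (hfc i).continuousOn
  have hAsub : ∀ i, A i ⊆ {x}ᶜ := by
    rintro i _ ⟨s, hs, rfl⟩
    exact hs
  -- node points
  have n1 : q (((0:ℂ) : OnePoint ℂ), 0) = q (((0:ℂ) : OnePoint ℂ), 1) :=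
    Quot.sound (Or.inl ⟨rfl, rfl⟩)
  have n2 : q (((1:ℂ) : OnePoint ℂ), 0) = q (((2:ℂ) : OnePoint ℂ), 1) :=
    Quot.sound (Or.inr (Or.inl ⟨rfl, rfl⟩))
  have n12 : q (((0:ℂ) : OnePoint ℂ), 0) ≠ q (((1:ℂ) : OnePoint ℂ), 0) := by
    rw [hq]
    intro hcontra
    rw [quot_eq_iff] at hcontra
    rcases hcontra with h | h | h <;>
      simp_all [relEx3₂, Prod.ext_iff, OnePoint.coe_eq_coe]
  have key : ∃ y, y ∈ A 0 ∩ A 1 := by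
    by_cases h1 : q (((0:ℂ) : OnePoint ℂ), 0) = x
    · -- then node n2 survives
      have h2 : q (((1:ℂ) : OnePoint ℂ), 0) ≠ x := fun h => n12 (h1.trans h.symm)
      refine ⟨q (((1:ℂ) : OnePoint ℂ), 0), ⟨(1:ℂ), h2, rfl⟩, ?_⟩
      exact ⟨(2:ℂ), by simpa [hT, hf] using (n2 ▸ h2 : q (((2:ℂ):OnePoint ℂ), 1) ≠ x),
        by simpa [hf] using n2.symm⟩
    · refine ⟨q (((0:ℂ) : OnePoint ℂ), 0), ⟨(0:ℂ), h1, rfl⟩, ?_⟩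
      exact ⟨(0:ℂ), by simpa [hT, hf] using (n1 ▸ h1 : q (((0:ℂ):OnePoint ℂ), 1) ≠ x),
        by simpa [hf] using n1.symm⟩
  have hunion : ({x}ᶜ : Set (Quot relEx3₂)) = A 0 ∪ A 1 := by
    apply Set.Subset.antisymm
    · intro y hy
      obtain ⟨⟨s, i⟩, rfl⟩ := Quot.exists_rep y
      fin_cases i
      · exact Or.inl ⟨s, hy, rfl⟩
      · exact Or.inr ⟨s, hy, rfl⟩
    · exact Set.union_subset (hAsub 0) (hAsub 1)
  rw [hunion]
  obtain ⟨y, hy⟩ := key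
  exact (connA 0).union ⟨y, hy⟩ (connA 1)
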